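/- arXiv:1905.04813 — 7 statements merged into one kernel-verified Lean document; each statement's English description precedes it below -/
import Mathlib

section
/- For every real number x, every α > 0, every τ > 0, and every exponent p with 0 < p < 2, the inequality exp(-|x|^p / α^p) ≥ exp(- x²/(2τ) - ((2-p)/2) · (α²/(p·τ))^(p/(p-2))) holds. -/
open Real

theorem generalized_gaussian_variational_lower_bound
    (x α τ p : ℝ) (hα : 0 < α) (hτ : 0 < τ) (hp : 0 < p) (hp2 : p < 2) :
    Real.exp (-(|x| ^ p / α ^ p)) ≥
      Real.exp (-(x ^ 2 / (2 * τ)) - ((2 - p) / 2) * (α ^ 2 / (p * τ)) ^ (p / (p - 2))) := by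
  rw [ge_iff_le, Real.exp_le_exp]
  have hps : p - 2 ≠ 0 := by linarith
  set A : ℝ := α ^ 2 / (p * τ) with hAdef
  have hApos : 0 < A := div_pos (pow_pos hα 2) (mul_pos hp hτ)
  set s : ℝ := A ^ (2 / (p - 2)) with hsdef
  have hspos : 0 < s := Real.rpow_pos_of_pos hApos _
  have hq1 : (0:ℝ) ≤ p / 2 := by linarith
  have hq2 : (0:ℝ) ≤ 1 - p / 2 := by linarith
  have ht : (0:ℝ) ≤ x ^ 2 / α ^ 2 := div_nonneg (sq_nonneg x) (sq_nonneg α)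
  have young := Real.geom_mean_le_arith_mean2_weighted hq1 hq2 ht hspos.le (by ring)
  have hmul := mul_le_mul_of_nonneg_right young
    (Real.rpow_nonneg hspos.le (p / 2 - 1))
  -- simplify left side
  have hL : (x ^ 2 / α ^ 2) ^ (p / 2) * s ^ (1 - p / 2) * s ^ (p / 2 - 1)
      = |x| ^ p / α ^ p := by
    rw [mul_assoc, ← Real.rpow_add hspos]
    norm_num
    rw [Real.div_rpow (sq_nonneg x) (sq_nonneg α), ← sq_abs x,
      ← Real.rpow_natCast |x| 2, ← Real.rpow_natCast α 2,
      ← Real.rpow_mul (abs_nonneg x), ← Real.rpow_mul hα.le]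
    norm_num
    rw [show 2 * (p / 2) = p by ring]
  have hsq1 : s ^ (p / 2 - 1) = A := by
    rw [hsdef, ← Real.rpow_mul hApos.le]
    rw [show 2 / (p - 2) * (p / 2 - 1) = 1 by field_simp, Real.rpow_one]
  have hsq2 : s * s ^ (p / 2 - 1) = A ^ (p / (p - 2)) := by
    nth_rewrite 1 [← Real.rpow_one s]
    rw [← Real.rpow_add hspos, hsdef, ← Real.rpow_mul hApos.le]
    congr 1
    field_simp
    ring
  have hR : (p / 2 * (x ^ 2 / α ^ 2) + (1 - p / 2) * s) * s ^ (p / 2 - 1)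
      = x ^ 2 / (2 * τ) + (2 - p) / 2 * A ^ (p / (p - 2)) := by
    have : (p / 2 * (x ^ 2 / α ^ 2) + (1 - p / 2) * s) * s ^ (p / 2 - 1)
        = p / 2 * (x ^ 2 / α ^ 2) * (s ^ (p / 2 - 1)) + (1 - p / 2) * (s * s ^ (p / 2 - 1)) := by
      ring
    rw [this, hsq2, hsq1, hAdef]
    have hα' : (α:ℝ) ≠ 0 := ne_of_gt hα
    have hp' : (p:ℝ) ≠ 0 := ne_of_gt hp
    have hτ' : (τ:ℝ) ≠ 0 := ne_of_gt hτ
    field_simp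
  rw [hL, hR] at hmul
  linarith
end

section
/- For every real number x, every α > 0, every τ > 0, and every exponent p with 0 < p < 2, one has |x|^p / α^p ≤ x²/(2τ) + ((2-p)/2) · (α²/(p·τ))^(p/(p-2)). -/
open Real

theorem variational_quadratic_upper_bound
    (x α τ p : ℝ) (hα : 0 < α) (hτ : 0 < τ) (hp : 0 < p) (hp2 : p < 2) :
    |x| ^ p / α ^ p ≤
      x ^ 2 / (2 * τ) + ((2 - p) / 2) * (α ^ 2 / (p * τ)) ^ (p / (p - 2)) := by
  have hpτ : (0:ℝ) < p * τ := mul_pos hp hτ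
  have hb : (0:ℝ) < α ^ 2 / (p * τ) := div_pos (by positivity) hpτ
  have hw₁ : (0:ℝ) ≤ p / 2 := by linarith
  have hw₂ : (0:ℝ) ≤ (2 - p) / 2 := by linarith
  have hw : p / 2 + (2 - p) / 2 = 1 := by ring
  have hp₁ : (0:ℝ) ≤ x ^ 2 / (p * τ) := by positivity
  have hp₂ : (0:ℝ) ≤ (α ^ 2 / (p * τ)) ^ (p / (p - 2)) :=
    Real.rpow_nonneg hb.le _
  have key := Real.geom_mean_le_arith_mean2_weighted hw₁ hw₂ hp₁ hp₂ hw
  have hps : p - 2 ≠ 0 := by linarith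
  have hexp : p / (p - 2) * ((2 - p) / 2) = -(p / 2) := by
    field_simp
    ring
  have h2 : ((α ^ 2 / (p * τ)) ^ (p / (p - 2))) ^ ((2 - p) / 2)
      = (α ^ 2 / (p * τ)) ^ (-(p / 2)) := by
    rw [← Real.rpow_mul hb.le, hexp]
  have hLHS : (x ^ 2 / (p * τ)) ^ (p / 2) *
      ((α ^ 2 / (p * τ)) ^ (p / (p - 2))) ^ ((2 - p) / 2)
      = |x| ^ p / α ^ p := by
    rw [h2, Real.rpow_neg hb.le,
      Real.div_rpow (by positivity) hpτ.le, Real.div_rpow (by positivity) hpτ.le]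
    have hx2 : (x ^ 2 : ℝ) ^ (p / 2) = |x| ^ p := by
      rw [show (x:ℝ) ^ 2 = |x| ^ (2:ℕ) by rw [sq_abs],
        ← Real.rpow_natCast |x| 2, ← Real.rpow_mul (abs_nonneg x),
        show ((2:ℕ):ℝ) * (p / 2) = p by push_cast; ring]
    have hα2 : ((α:ℝ) ^ 2) ^ (p / 2) = α ^ p := by
      rw [← Real.rpow_natCast α 2, ← Real.rpow_mul hα.le,
        show ((2:ℕ):ℝ) * (p / 2) = p by push_cast; ring]
    have hpt : (0:ℝ) < (p * τ) ^ (p / 2) := Real.rpow_pos_of_pos hpτ _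
    have hαp : (0:ℝ) < α ^ p := Real.rpow_pos_of_pos hα _
    rw [hx2, hα2]
    field_simp
  rw [hLHS] at key
  calc |x| ^ p / α ^ p ≤ p / 2 * (x ^ 2 / (p * τ)) +
        (2 - p) / 2 * (α ^ 2 / (p * τ)) ^ (p / (p - 2)) := key
    _ = x ^ 2 / (2 * τ) + (2 - p) / 2 * (α ^ 2 / (p * τ)) ^ (p / (p - 2)) := by
        congr 1
        field_simp
end

section
/- Let 0 < p < 2, α > 0, and let x be a nonzero real number. Then equality holds in the bound |x|^p / α^p ≤ x²/(2τ) + ((2-p)/2) · (α²/(p·τ))^(p/(p-2)) precisely when the variational parameter takes the value τ = α^p · |x|^(2-p) / p; in particular, at this value of τ the lower bound of Lemma 1 is attained: exp(-|x|^p/α^p) = exp(- x²/(2τ) - ((2-p)/2)(α²/(pτ))^(p/(p-2))). -/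
open Real

theorem variational_bound_equality_iff_optimal_tau
    (x α p : ℝ) (hx : x ≠ 0) (hα : 0 < α) (hp : 0 < p) (hp2 : p < 2) :
    (∀ τ : ℝ, 0 < τ →
      (|x| ^ p / α ^ p =
          x ^ 2 / (2 * τ) + ((2 - p) / 2) * (α ^ 2 / (p * τ)) ^ (p / (p - 2))
        ↔ τ = α ^ p * |x| ^ (2 - p) / p)) ∧
    Real.exp (-(|x| ^ p / α ^ p)) =
      Real.exp (-(x ^ 2 / (2 * (α ^ p * |x| ^ (2 - p) / p)))
        - ((2 - p) / 2) *
          (α ^ 2 / (p * (α ^ p * |x| ^ (2 - p) / p))) ^ (p / (p - 2))) := by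
  have ha : 0 < |x| := abs_pos.2 hx
  set a := |x| with hadef
  have hp2' : (0:ℝ) < 2 - p := by linarith
  have hpne : p - 2 ≠ 0 := by linarith
  have hap : (0:ℝ) < a ^ p := rpow_pos_of_pos ha p
  have hαp : (0:ℝ) < α ^ p := rpow_pos_of_pos hα p
  have haq : (0:ℝ) < a ^ (2 - p) := rpow_pos_of_pos ha _
  have hT : (0:ℝ) < α ^ p * a ^ (2 - p) / p := by positivity
  set T := α ^ p * a ^ (2 - p) / p with hTdef
  have hpT : p * T = α ^ p * a ^ (2 - p) := by
    rw [hTdef]; field_simp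
  have hx2 : x ^ 2 = a ^ (2:ℝ) := by
    rw [← sq_abs, ← hadef, ← Real.rpow_natCast a 2]; norm_num
  have ha2 : a ^ (2:ℝ) = a ^ p * a ^ (2 - p) := by
    rw [← Real.rpow_add ha]; ring_nf
  -- value of the first term at T
  have h1 : x ^ 2 / (2 * T) = p / 2 * (a ^ p / α ^ p) := by
    have h2T : 2 * T = 2 * (α ^ p * a ^ (2 - p)) / p := by rw [hTdef]; ring
    rw [hx2, ha2, h2T]
    field_simp
  -- value of the second term at T
  have h2 : (α ^ 2 / (p * T)) ^ (p / (p - 2)) = a ^ p / α ^ p := by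
    have hα2 : (α:ℝ) ^ 2 = α ^ (2:ℝ) := by
      rw [← Real.rpow_natCast α 2]; norm_num
    have hbase : α ^ 2 / (p * T) = α ^ (2 - p) * a ^ (-(2 - p)) := by
      rw [hpT, hα2, Real.rpow_sub hα, Real.rpow_neg ha.le]
      field_simp
    have e1 : (2 - p) * (p / (p - 2)) = -p := by field_simp; ring
    have e2 : -(2 - p) * (p / (p - 2)) = p := by field_simp; ring
    rw [hbase, Real.mul_rpow (rpow_nonneg hα.le _) (rpow_nonneg ha.le _),
      ← Real.rpow_mul hα.le, ← Real.rpow_mul ha.le, e1, e2,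
      Real.rpow_neg hα.le, inv_mul_eq_div]
  -- equality at T
  have hEq : a ^ p / α ^ p =
      x ^ 2 / (2 * T) + (2 - p) / 2 * (α ^ 2 / (p * T)) ^ (p / (p - 2)) := by
    rw [h1, h2]; ring
  clear_value T
  constructor
  · intro τ hτ
    constructor
    · intro heq
      -- substitute t = τ / T
      set t := τ / T with htdef
      have ht : 0 < t := div_pos hτ hT
      have hτT : τ = t * T := by rw [htdef]; field_simp
      -- first term
      have k1 : x ^ 2 / (2 * τ) = p / 2 * (a ^ p / α ^ p) * t⁻¹ := by
        rw [hτT, hx2, ha2, hTdef]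
        field_simp
      -- second term
      have k2 : (α ^ 2 / (p * τ)) ^ (p / (p - 2))
          = a ^ p / α ^ p * t ^ (p / (2 - p)) := by
        have hb : α ^ 2 / (p * τ) = α ^ 2 / (p * T) * t⁻¹ := by
          rw [hτT]; field_simp
        have hpos : (0:ℝ) ≤ α ^ 2 / (p * T) := by positivity
        rw [hb, Real.mul_rpow hpos (by positivity), h2,
          ← Real.rpow_neg_one t, ← Real.rpow_mul ht.le]
        congr 2
        field_simp
        ring
      clear_value t
      have hC : (0:ℝ) < a ^ p / α ^ p := div_pos hap hαp
      rw [k1, k2] at heq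
      have key : 1 = p / 2 * t⁻¹ + (2 - p) / 2 * t ^ (p / (2 - p)) := by
        have hmm : a ^ p / α ^ p * 1
            = a ^ p / α ^ p * (p / 2 * t⁻¹ + (2 - p) / 2 * t ^ (p / (2 - p))) := by
          linear_combination heq
        exact mul_left_cancel₀ hC.ne' hmm
      -- multiply by t
      have key2 : t = p / 2 + (2 - p) / 2 * t ^ (2 / (2 - p)) := by
        have ht1 : t ^ (p / (2 - p)) * t = t ^ (2 / (2 - p)) := by
          nth_rewrite 2 [← Real.rpow_one t]
          rw [← Real.rpow_add ht]
          congr 1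
          field_simp
          ring
        have := congrArg (· * t) key
        rw [add_mul] at this
        rw [mul_assoc, mul_assoc] at this
        rw [inv_mul_cancel₀ ht.ne', ht1] at this
        linarith [this]
      -- Bernoulli: t = 1
      have ht1 : t = 1 := by
        by_contra hne
        have hr : (1:ℝ) < 2 / (2 - p) := by
          rw [lt_div_iff₀ hp2']; linarith
        have hs : -1 ≤ t - 1 := by linarith
        have hs' : t - 1 ≠ 0 := sub_ne_zero.2 hne
        have hb := one_add_mul_self_lt_rpow_one_add hs hs' hr
        have h1t : (1:ℝ) + (t - 1) = t := by ring
        rw [h1t] at hb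
        have hmul : (2 - p) / 2 * (1 + 2 / (2 - p) * (t - 1))
            < (2 - p) / 2 * t ^ (2 / (2 - p)) :=
          (mul_lt_mul_iff_right₀ (by linarith)).2 hb
        have hexp : (2 - p) / 2 * (1 + 2 / (2 - p) * (t - 1)) = t - p / 2 := by
          have hone : (2 - p) / 2 * (2 / (2 - p)) = 1 := by field_simp
          calc (2 - p) / 2 * (1 + 2 / (2 - p) * (t - 1))
              = (2 - p) / 2 + (2 - p) / 2 * (2 / (2 - p)) * (t - 1) := by ring
            _ = t - p / 2 := by rw [hone]; ring
        rw [hexp] at hmul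
        linarith [key2]
      rw [hτT, ht1, one_mul]
    · rintro rfl
      exact hEq
  · rw [hEq]; ring_nf
end

section
/- For every real number x, every α > 0, and every exponent p with 0 < p < 2, the supremum over τ > 0 of exp(- x²/(2τ) - ((2-p)/2) · (α²/(p·τ))^(p/(p-2))) equals exp(-|x|^p / α^p). -/
open Real

/-- Square as rpow: for `0 ≤ t`, `(t^2)^(p/2) = t^p`. -/
private lemma sq_rpow_half (t p : ℝ) (ht : 0 ≤ t) : (t ^ 2) ^ (p / 2) = t ^ p := by
  rw [← Real.rpow_natCast t 2, ← Real.rpow_mul ht]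
  congr 1
  push_cast
  ring

theorem variational_bound_supremum
    (x α p : ℝ) (hα : 0 < α) (hp : 0 < p) (hp2 : p < 2) :
    (⨆ τ : {τ : ℝ // 0 < τ},
        Real.exp (-(x ^ 2 / (2 * (τ : ℝ)))
          - ((2 - p) / 2) * (α ^ 2 / (p * (τ : ℝ))) ^ (p / (p - 2))))
      = Real.exp (-(|x| ^ p / α ^ p)) := by
  have hp2' : (0:ℝ) < 2 - p := by linarith
  have h2pne : (2:ℝ) - p ≠ 0 := hp2'.ne'
  have hpm2ne : p - 2 ≠ 0 := sub_ne_zero.mpr (by linarith)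
  have hαp : (0:ℝ) < α ^ p := Real.rpow_pos_of_pos hα p
  set m : ℝ := |x| ^ p / α ^ p with hm
  set f : {τ : ℝ // 0 < τ} → ℝ := fun τ =>
    Real.exp (-(x ^ 2 / (2 * (τ : ℝ)))
      - ((2 - p) / 2) * (α ^ 2 / (p * (τ : ℝ))) ^ (p / (p - 2))) with hf
  -- conjugate exponents
  have hPQ : (2 / p).HolderConjugate (2 / (2 - p)) := by
    rw [Real.holderConjugate_iff]
    constructor
    · rw [lt_div_iff₀ hp]; linarith
    · rw [inv_div, inv_div]; ring
  -- the key inequality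
  have key : ∀ τ : ℝ, 0 < τ →
      m ≤ x ^ 2 / (2 * τ) + ((2 - p) / 2) * (α ^ 2 / (p * τ)) ^ (p / (p - 2)) := by
    intro τ hτ
    have hpτ : 0 < p * τ := mul_pos hp hτ
    have hx2 : (0:ℝ) ≤ x ^ 2 / (p * τ) := by positivity
    have hα2 : (0:ℝ) < α ^ 2 / (p * τ) := by positivity
    set a : ℝ := (x ^ 2 / (p * τ)) ^ (p / 2) with ha
    set b : ℝ := (α ^ 2 / (p * τ)) ^ (-(p / 2)) with hb
    have key0 : a * b ≤ a ^ (2 / p) / (2 / p) + b ^ (2 / (2 - p)) / (2 / (2 - p)) :=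
      Real.young_inequality_of_nonneg (Real.rpow_nonneg hx2 (p / 2))
        (Real.rpow_nonneg hα2.le (-(p / 2))) hPQ
    have h1 : a * b = m := by
      rw [ha, hb, Real.rpow_neg hα2.le, Real.div_rpow (by positivity) hpτ.le,
        Real.div_rpow (by positivity) hpτ.le, hm,
        sq_rpow_half α p hα.le, ← sq_abs x, sq_rpow_half |x| p (abs_nonneg x)]
      field_simp
    have h2 : a ^ (2 / p) / (2 / p) = x ^ 2 / (2 * τ) := by
      rw [ha, ← Real.rpow_mul hx2]
      rw [show p / 2 * (2 / p) = 1 by field_simp, Real.rpow_one]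
      field_simp
    have h3 : b ^ (2 / (2 - p)) / (2 / (2 - p))
        = ((2 - p) / 2) * (α ^ 2 / (p * τ)) ^ (p / (p - 2)) := by
      rw [hb, ← Real.rpow_mul hα2.le]
      rw [show -(p / 2) * (2 / (2 - p)) = p / (p - 2) by
        field_simp [h2pne, hpm2ne]; ring]
      rw [div_div_eq_mul_div, mul_comm]
      ring
    rw [h1, h2, h3] at key0
    exact key0
  -- upper bound on each term
  have hub : ∀ τ : {τ : ℝ // 0 < τ}, f τ ≤ Real.exp (-m) := by
    intro ⟨τ, hτ⟩
    apply Real.exp_le_exp.mpr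
    have := key τ hτ
    simp only
    linarith
  have hbdd : BddAbove (Set.range f) := ⟨Real.exp (-m), by rintro _ ⟨τ, rfl⟩; exact hub τ⟩
  apply le_antisymm (ciSup_le hub)
  by_cases hx : x = 0
  · -- supremum approached as τ → 0⁺
    subst hx
    have hm0 : m = 0 := by simp [hm, Real.zero_rpow hp.ne']
    refine (le_csSup_iff hbdd (Set.range_nonempty f)).mpr fun b hb => ?_
    replace hb : ∀ τ, f τ ≤ b := fun τ => hb (Set.mem_range_self τ)
    have hc : p / (p - 2) < 0 := div_neg_of_pos_of_neg hp (by linarith)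
    -- sequence τ_n = 1/(n+1)
    have htend : Filter.Tendsto
        (fun n : ℕ => f ⟨((n : ℝ) + 1)⁻¹, by positivity⟩) Filter.atTop (nhds 1) := by
      have h1 : Filter.Tendsto (fun n : ℕ => α ^ 2 / p * ((n : ℝ) + 1))
          Filter.atTop Filter.atTop := by
        apply Filter.Tendsto.const_mul_atTop (by positivity)
        exact Filter.tendsto_atTop_add_const_right _ 1 tendsto_natCast_atTop_atTop
      have h2 : Filter.Tendsto (fun n : ℕ => (α ^ 2 / p * ((n : ℝ) + 1)) ^ (p / (p - 2)))
          Filter.atTop (nhds 0) := by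
        have h0 : Filter.Tendsto (fun z : ℝ => z ^ (-(p / (2 - p)))) Filter.atTop (nhds 0) :=
          tendsto_rpow_neg_atTop (by positivity)
        have hexp : p / (p - 2) = -(p / (2 - p)) := by
          rw [show p - 2 = -(2 - p) by ring, div_neg]
        simp only [hexp]
        exact h0.comp h1
      have h3 : Filter.Tendsto
          (fun y : ℝ => Real.exp (0 - (2 - p) / 2 * y)) (nhds 0) (nhds 1) := by
        have hcont : Continuous (fun y : ℝ => Real.exp (0 - (2 - p) / 2 * y)) := by
          fun_prop
        have h4 := hcont.tendsto 0
        simpa using h4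
      refine (h3.comp h2).congr fun n => ?_
      simp only [hf, Function.comp]
      have hn : ((n : ℝ) + 1) ≠ 0 := by positivity
      rw [show α ^ 2 / (p * ((n:ℝ) + 1)⁻¹) = α ^ 2 / p * ((n : ℝ) + 1) by field_simp]
      norm_num
    have hble : ∀ n : ℕ, f ⟨((n : ℝ) + 1)⁻¹, by positivity⟩ ≤ b := fun n => hb _
    have h1b : (1:ℝ) ≤ b := le_of_tendsto' htend hble
    rw [hm0, neg_zero, Real.exp_zero]
    exact h1b
  · -- supremum attained at τ* = |x|^(2-p) * α^p / p
    have hxa : 0 < |x| := abs_pos.mpr hx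
    set τ : ℝ := |x| ^ (2 - p) * α ^ p / p with hτdef
    have hτ : 0 < τ := by
      apply div_pos (mul_pos (Real.rpow_pos_of_pos hxa _) hαp) hp
    have hval : f ⟨τ, hτ⟩ = Real.exp (-m) := by
      simp only [hf]
      congr 1
      have hx2p : (0:ℝ) < |x| ^ (2 - p) := Real.rpow_pos_of_pos hxa _
      have hxp : (0:ℝ) < |x| ^ p := Real.rpow_pos_of_pos hxa _
      have e1 : x ^ 2 / (2 * τ) = p * |x| ^ p / (2 * α ^ p) := by
        have hxx : x ^ 2 = |x| ^ p * |x| ^ (2 - p) := by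
          rw [← Real.rpow_add hxa, ← sq_abs x, ← Real.rpow_natCast |x| 2]
          norm_num
        rw [hτdef, hxx]
        field_simp
      have e2 : α ^ 2 / (p * τ) = (α / |x|) ^ (2 - p) := by
        have hαα : α ^ 2 = α ^ (2 - p) * α ^ p := by
          rw [← Real.rpow_add hα, ← Real.rpow_natCast α 2]
          norm_num
        rw [hτdef, hαα, Real.div_rpow hα.le hxa.le]
        field_simp
      have e3 : ((α / |x|) ^ (2 - p) : ℝ) ^ (p / (p - 2)) = |x| ^ p / α ^ p := by
        rw [← Real.rpow_mul (by positivity),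
          show (2 - p) * (p / (p - 2)) = -p by field_simp [hpm2ne]; ring,
          Real.rpow_neg (by positivity), ← Real.inv_rpow (by positivity),
          inv_div, Real.div_rpow hxa.le hα.le]
      rw [e1, e2, e3, hm]
      field_simp
      ring
    calc Real.exp (-m) = f ⟨τ, hτ⟩ := hval.symm
      _ ≤ _ := le_ciSup hbdd _
end

section
/- Let N be a positive natural number, let 0 < p < 2, α > 0, C > 0, and let x = (x₁,…,x_N) ∈ ℝ^N and λ = (λ₁,…,λ_N) ∈ (0,∞)^N. Then ∏_{i=1}^N (C/α) · exp(-|x_i|^p / α^p) ≥ (C^N / α^N) · exp(-(1/2) ∑_{i=1}^N λ_i x_i²) · exp(- ((2-p)/2) · (α²/p)^(p/(p-2)) · ∑_{i=1}^N λ_i^(p/(p-2))). -/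
open Real Finset

lemma key_ineq (p α l x : ℝ) (hp : 0 < p) (hp2 : p < 2) (hα : 0 < α) (hl : 0 < l) :
    |x| ^ p / α ^ p ≤ 1/2 * (l * x^2) +
      (2-p)/2 * ((α^2/p) ^ (p/(p-2)) * l ^ (p/(p-2))) := by
  have h2p : 0 < 2 - p := by linarith
  have hconj : ((2:ℝ)/p).HolderConjugate (2/(2-p)) := by
    constructor
    · rw [inv_div, inv_div, inv_one]; ring
    · positivity
    · positivity
  set e : ℝ := p/(2-p) with he
  have hpe : p/(p-2) = -e := by
    rw [he]
    have h : p - 2 = -(2-p) := by ring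
    rw [h, div_neg]
  have ha0 : (0:ℝ) ≤ (l/p) * x^2 := by positivity
  have hb0 : (0:ℝ) < (p/l) ^ (p/2) / α ^ p := by positivity
  have hy := Real.young_inequality_of_nonneg
    (Real.rpow_nonneg ha0 (p/2)) hb0.le hconj
  have eq1 : ((l/p) * x^2) ^ (p/2) * ((p/l) ^ (p/2) / α ^ p) = |x| ^ p / α ^ p := by
    rw [mul_div_assoc', ← Real.mul_rpow ha0 (by positivity)]
    have h1 : (l/p) * x^2 * (p/l) = x^2 := by
      field_simp
    rw [h1, ← sq_abs, ← Real.rpow_natCast |x| 2, ← Real.rpow_mul (abs_nonneg x)]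
    push_cast
    rw [show (2:ℝ) * (p/2) = p by ring]
  have eq2 : (((l/p) * x^2) ^ (p/2)) ^ ((2:ℝ)/p) / (2/p) = 1/2 * (l * x^2) := by
    rw [← Real.rpow_mul ha0]
    have h1 : p/2 * (2/p) = 1 := by field_simp
    rw [h1, Real.rpow_one]
    field_simp
  have eq3 : ((p/l) ^ (p/2) / α ^ p) ^ ((2:ℝ)/(2-p)) / (2/(2-p)) =
      (2-p)/2 * ((α^2/p) ^ (p/(p-2)) * l ^ (p/(p-2))) := by
    rw [hpe]
    have hplA : (0:ℝ) ≤ p/l := by positivity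
    rw [Real.div_rpow (Real.rpow_nonneg hplA _) (Real.rpow_nonneg hα.le _),
      ← Real.rpow_mul hplA, ← Real.rpow_mul hα.le]
    have h1 : p/2 * (2/(2-p)) = e := by rw [he]; field_simp
    have h2 : p * (2/(2-p)) = 2 * e := by rw [he]; field_simp
    rw [h1, h2]
    have h3 : α ^ (2 * e) = (α^2) ^ e := by
      rw [← Real.rpow_natCast α 2, ← Real.rpow_mul hα.le]
      norm_num
    rw [h3, ← Real.div_rpow hplA (by positivity)]
    have h4 : (α^2/p) ^ (-e) * l ^ (-e) = (p/l/α^2) ^ e := by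
      rw [← Real.mul_rpow (by positivity) hl.le,
        Real.rpow_neg (by positivity), ← Real.inv_rpow (by positivity)]
      congr 1
      field_simp
    rw [h4]
    field_simp
  rw [eq1, eq2, eq3] at hy
  exact hy

theorem generalized_gaussian_density_variational_lower_bound
    (N : ℕ) (hN : 0 < N) (p α C : ℝ) (hp : 0 < p) (hp2 : p < 2)
    (hα : 0 < α) (hC : 0 < C)
    (x : Fin N → ℝ) (l : Fin N → ℝ) (hl : ∀ i, 0 < l i) :
    (∏ i : Fin N, (C / α) * Real.exp (-(|x i| ^ p / α ^ p))) ≥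
      (C ^ N / α ^ N) *
        Real.exp (-(1 / 2) * ∑ i : Fin N, l i * (x i) ^ 2) *
        Real.exp (-((2 - p) / 2) * (α ^ 2 / p) ^ (p / (p - 2)) *
          ∑ i : Fin N, (l i) ^ (p / (p - 2))) := by
  have hprod : (∏ i : Fin N, (C / α) * Real.exp (-(|x i| ^ p / α ^ p)))
      = (C/α)^N * Real.exp (∑ i : Fin N, -(|x i| ^ p / α ^ p)) := by
    rw [Finset.prod_mul_distrib, Finset.prod_const, Real.exp_sum, Finset.card_univ,
      Fintype.card_fin]
  rw [hprod, ← div_pow, mul_assoc, ← Real.exp_add, ge_iff_le]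
  apply mul_le_mul_of_nonneg_left _ (by positivity)
  rw [Real.exp_le_exp]
  have hsum : ∑ i : Fin N, (1/2 * (l i * (x i)^2) +
      (2-p)/2 * ((α^2/p) ^ (p/(p-2)) * (l i) ^ (p/(p-2)))) =
      (1 / 2) * ∑ i : Fin N, l i * (x i) ^ 2 +
      ((2 - p) / 2) * (α ^ 2 / p) ^ (p / (p - 2)) * ∑ i : Fin N, (l i) ^ (p / (p - 2)) := by
    rw [Finset.sum_add_distrib, ← Finset.mul_sum]
    simp only [← mul_assoc]
    rw [← Finset.mul_sum]
  have h : ∑ i : Fin N, |x i| ^ p / α ^ p ≤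
      ∑ i : Fin N, (1/2 * (l i * (x i)^2) +
        (2-p)/2 * ((α^2/p) ^ (p/(p-2)) * (l i) ^ (p/(p-2)))) :=
    Finset.sum_le_sum (fun i _ => key_ineq p α (l i) (x i) hp hp2 hα (hl i))
  rw [hsum] at h
  rw [show (∑ i : Fin N, -(|x i| ^ p / α ^ p)) = -∑ i : Fin N, |x i| ^ p / α ^ p from Finset.sum_neg_distrib _]
  linarith [h]
end

section
/- Let N be a positive natural number, let 0 < p < 2, α > 0, and let x ∈ ℝ^N and λ ∈ (0,∞)^N. Then ∑_{i=1}^N |x_i|^p / α^p ≤ (1/2) ∑_{i=1}^N λ_i x_i² + ((2-p)/2) · (α²/p)^(p/(p-2)) · ∑_{i=1}^N λ_i^(p/(p-2)). -/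
open Real Finset

lemma lp_key (p α : ℝ) (hp : 0 < p) (hp2 : p < 2) (hα : 0 < α) (X L : ℝ) (hL : 0 < L) :
    |X| ^ p / α ^ p ≤
      1 / 2 * (L * X ^ 2) +
        (2 - p) / 2 * ((α ^ 2 / p) ^ (p / (p - 2)) * L ^ (p / (p - 2))) := by
  have hp2' : p - 2 ≠ 0 := by linarith
  set q := p / (p - 2) with hq
  have hC : (0:ℝ) < α ^ 2 / p := by positivity
  have ha : (0:ℝ) ≤ L * X ^ 2 / p := by positivity
  have hb : (0:ℝ) ≤ (α ^ 2 / p) ^ q * L ^ q := by positivity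
  have hw : p / 2 + (2 - p) / 2 = 1 := by ring
  have h := Real.geom_mean_le_arith_mean2_weighted (by linarith : (0:ℝ) ≤ p/2)
      (by linarith : (0:ℝ) ≤ (2-p)/2) ha hb hw
  have hqe : q * ((2 - p) / 2) = -(p / 2) := by
    rw [hq]; field_simp; ring
  have hα2 : (α ^ 2 : ℝ) ^ (p/2) = α ^ p := by
    rw [← Real.rpow_natCast α 2, ← Real.rpow_mul hα.le]
    congr 1; push_cast; ring
  have hX2 : ((X ^ 2 : ℝ)) ^ (p/2) = |X| ^ p := by
    rw [← sq_abs, ← Real.rpow_natCast |X| 2, ← Real.rpow_mul (abs_nonneg X)]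
    congr 1; push_cast; ring
  have e1 : (L * X ^ 2 / p) ^ (p/2) = L ^ (p/2) * |X| ^ p / p ^ (p/2) := by
    rw [Real.div_rpow (by positivity) hp.le, Real.mul_rpow hL.le (by positivity), hX2]
  have e2 : ((α ^ 2 / p) ^ q * L ^ q) ^ ((2-p)/2) = p ^ (p/2) / (α ^ p * L ^ (p/2)) := by
    rw [Real.mul_rpow (Real.rpow_nonneg hC.le q) (Real.rpow_nonneg hL.le q),
        ← Real.rpow_mul hC.le, ← Real.rpow_mul hL.le, hqe,
        Real.rpow_neg hC.le, Real.rpow_neg hL.le,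
        Real.div_rpow (by positivity) hp.le, hα2]
    field_simp
  have hLp : (0:ℝ) < L ^ (p/2) := Real.rpow_pos_of_pos hL _
  have hpp : (0:ℝ) < p ^ (p/2) := Real.rpow_pos_of_pos hp _
  have hαp : (0:ℝ) < α ^ p := Real.rpow_pos_of_pos hα _
  have heq : (L * X ^ 2 / p) ^ (p/2) * ((α ^ 2 / p) ^ q * L ^ q) ^ ((2-p)/2)
      = |X| ^ p / α ^ p := by
    rw [e1, e2]
    field_simp
  calc |X| ^ p / α ^ p
      = (L * X ^ 2 / p) ^ (p/2) * ((α ^ 2 / p) ^ q * L ^ q) ^ ((2-p)/2) := heq.symm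
    _ ≤ p/2 * (L * X ^ 2 / p) + (2-p)/2 * ((α ^ 2 / p) ^ q * L ^ q) := h
    _ = 1 / 2 * (L * X ^ 2) + (2 - p) / 2 * ((α ^ 2 / p) ^ q * L ^ q) := by
        field_simp

theorem lp_penalty_variational_quadratic_upper_bound
    (N : ℕ) (hN : 0 < N) (p α : ℝ) (hp : 0 < p) (hp2 : p < 2) (hα : 0 < α)
    (x : Fin N → ℝ) (l : Fin N → ℝ) (hl : ∀ i, 0 < l i) :
    (∑ i : Fin N, |x i| ^ p / α ^ p) ≤
      (1 / 2) * ∑ i : Fin N, l i * (x i) ^ 2 +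
        ((2 - p) / 2) * (α ^ 2 / p) ^ (p / (p - 2)) *
          ∑ i : Fin N, (l i) ^ (p / (p - 2)) := by
  rw [Finset.mul_sum, Finset.mul_sum, ← Finset.sum_add_distrib]
  refine Finset.sum_le_sum fun i _ => ?_
  have := lp_key p α hp hp2 hα (x i) (l i) (hl i)
  calc |x i| ^ p / α ^ p
      ≤ 1 / 2 * (l i * x i ^ 2) +
        (2 - p) / 2 * ((α ^ 2 / p) ^ (p / (p - 2)) * (l i) ^ (p / (p - 2))) := this
    _ = 1 / 2 * (l i * x i ^ 2) +
        (2 - p) / 2 * (α ^ 2 / p) ^ (p / (p - 2)) * (l i) ^ (p / (p - 2)) := by ring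
end

section
/- Let N be a positive natural number, let 0 < p < 2, α > 0, C > 0, and let x ∈ ℝ^N be a vector all of whose components are nonzero. Then the supremum over λ ∈ (0,∞)^N of (C^N/α^N) · exp(-(1/2) ∑_i λ_i x_i²) · exp(-((2-p)/2)(α²/p)^(p/(p-2)) ∑_i λ_i^(p/(p-2))) equals the generalized Gaussian density ∏_i (C/α) exp(-|x_i|^p/α^p), and this supremum is attained at λ_i = p / (α^p |x_i|^(2-p)). -/
open Real Finset

private lemma gg_log_cancel {A B : ℝ} (hA : 0 < A) (hB : 0 < B)
    (h : Real.log A = Real.log B) : A = B :=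
  Real.log_injOn_pos (Set.mem_Ioi.mpr hA) (Set.mem_Ioi.mpr hB) h

private lemma gg_key_le (p α : ℝ) (hp : 0 < p) (hp2 : p < 2) (hα : 0 < α)
    (x : ℝ) (hx : x ≠ 0) (l : ℝ) (hl : 0 < l) :
    |x| ^ p / α ^ p ≤ 1 / 2 * l * x ^ 2
      + (2 - p) / 2 * (α ^ 2 / p) ^ (p / (p - 2)) * l ^ (p / (p - 2)) := by
  have ha : 0 < |x| := abs_pos.mpr hx
  have hK : 0 < (α ^ 2 / p : ℝ) := by positivity
  set q := p / (p - 2) with hq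
  have h1 : 0 < l * x ^ 2 / p := by positivity
  have h2 : 0 < (α ^ 2 / p) ^ q * l ^ q := by positivity
  have amgm := Real.geom_mean_le_arith_mean2_weighted
      (w₁ := p / 2) (w₂ := (2 - p) / 2) (p₁ := l * x ^ 2 / p)
      (p₂ := (α ^ 2 / p) ^ q * l ^ q)
      (by linarith) (by linarith) h1.le h2.le (by ring)
  have hgm : (l * x ^ 2 / p) ^ (p / 2) * ((α ^ 2 / p) ^ q * l ^ q) ^ ((2 - p) / 2)
      = |x| ^ p / α ^ p := by
    apply gg_log_cancel (by positivity) (by positivity)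
    rw [Real.log_mul (by positivity) (by positivity),
        Real.log_rpow h1, Real.log_rpow h2,
        Real.log_mul (by positivity) (by positivity),
        Real.log_rpow hK, Real.log_rpow hl,
        Real.log_div (by positivity) (by positivity),
        Real.log_mul hl.ne' (by positivity),
        Real.log_div (by positivity) hp.ne',
        Real.log_div (by positivity) (by positivity),
        Real.log_pow, Real.log_pow, Real.log_rpow ha, Real.log_rpow hα,
        ← Real.log_abs x]
    have h2p : p - 2 ≠ 0 := by linarith
    field_simp [hq]
    have hq' : q * (p - 2) = p := by rw [hq]; exact div_mul_cancel₀ p h2p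
    linear_combination (-(Real.log l - Real.log p + 2 * Real.log α)) * hq'
  calc |x| ^ p / α ^ p = _ := hgm.symm
    _ ≤ p / 2 * (l * x ^ 2 / p) + (2 - p) / 2 * ((α ^ 2 / p) ^ q * l ^ q) := amgm
    _ = 1 / 2 * l * x ^ 2 + (2 - p) / 2 * (α ^ 2 / p) ^ q * l ^ q := by
        field_simp

private lemma gg_key_eq (p α : ℝ) (hp : 0 < p) (hp2 : p < 2) (hα : 0 < α)
    (x : ℝ) (hx : x ≠ 0) :
    1 / 2 * (p / (α ^ p * |x| ^ (2 - p))) * x ^ 2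
      + (2 - p) / 2 * (α ^ 2 / p) ^ (p / (p - 2)) *
          (p / (α ^ p * |x| ^ (2 - p))) ^ (p / (p - 2))
      = |x| ^ p / α ^ p := by
  have ha : 0 < |x| := abs_pos.mpr hx
  have hK : 0 < (α ^ 2 / p : ℝ) := by positivity
  have hL : 0 < p / (α ^ p * |x| ^ (2 - p)) := by positivity
  have h2p : p - 2 ≠ 0 := by linarith
  have h1 : (p / (α ^ p * |x| ^ (2 - p))) * x ^ 2 = p * (|x| ^ p / α ^ p) := by
    apply gg_log_cancel (by positivity) (by positivity)
    rw [Real.log_mul hL.ne' (by positivity),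
        Real.log_div hp.ne' (by positivity),
        Real.log_mul (by positivity) (by positivity),
        Real.log_rpow hα, Real.log_rpow ha,
        Real.log_mul hp.ne' (by positivity),
        Real.log_div (by positivity) (by positivity),
        Real.log_rpow ha, Real.log_rpow hα,
        Real.log_pow, ← Real.log_abs x]
    push_cast
    ring
  have h2 : (α ^ 2 / p) ^ (p / (p - 2)) *
      (p / (α ^ p * |x| ^ (2 - p))) ^ (p / (p - 2)) = |x| ^ p / α ^ p := by
    apply gg_log_cancel (by positivity) (by positivity)
    rw [Real.log_mul (by positivity) (by positivity),
        Real.log_rpow hK, Real.log_rpow hL,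
        Real.log_div (by positivity) hp.ne',
        Real.log_div hp.ne' (by positivity),
        Real.log_mul (by positivity) (by positivity),
        Real.log_rpow hα, Real.log_rpow ha,
        Real.log_div (by positivity) (by positivity),
        Real.log_rpow ha, Real.log_rpow hα,
        Real.log_pow]
    push_cast
    field_simp
    ring
  rw [mul_assoc, mul_assoc, h1, h2]
  ring

theorem generalized_gaussian_variational_bound_tight
    (N : ℕ) (hN : 0 < N) (p α C : ℝ) (hp : 0 < p) (hp2 : p < 2)
    (hα : 0 < α) (hC : 0 < C)
    (x : Fin N → ℝ) (hx : ∀ i, x i ≠ 0) :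
    (⨆ l : Fin N → {t : ℝ // 0 < t},
        (C ^ N / α ^ N) *
          Real.exp (-(1 / 2) * ∑ i : Fin N, (l i : ℝ) * (x i) ^ 2) *
          Real.exp (-((2 - p) / 2) * (α ^ 2 / p) ^ (p / (p - 2)) *
            ∑ i : Fin N, ((l i : ℝ)) ^ (p / (p - 2))))
      = ∏ i : Fin N, (C / α) * Real.exp (-(|x i| ^ p / α ^ p)) ∧
    (C ^ N / α ^ N) *
        Real.exp (-(1 / 2) * ∑ i : Fin N,
          (p / (α ^ p * |x i| ^ (2 - p))) * (x i) ^ 2) *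
        Real.exp (-((2 - p) / 2) * (α ^ 2 / p) ^ (p / (p - 2)) *
          ∑ i : Fin N, (p / (α ^ p * |x i| ^ (2 - p))) ^ (p / (p - 2)))
      = ∏ i : Fin N, (C / α) * Real.exp (-(|x i| ^ p / α ^ p)) := by
  haveI : Nonempty {t : ℝ // 0 < t} := ⟨⟨1, one_pos⟩⟩
  set q := p / (p - 2) with hq
  set K := (α ^ 2 / p) ^ q with hKdef
  -- value of the expression for a real-valued l
  have hFeq : ∀ l : Fin N → ℝ,
      (C ^ N / α ^ N) * Real.exp (-(1 / 2) * ∑ i : Fin N, l i * (x i) ^ 2) *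
        Real.exp (-((2 - p) / 2) * K * ∑ i : Fin N, (l i) ^ q)
      = (C / α) ^ N *
          Real.exp (-∑ i : Fin N, (1 / 2 * l i * (x i) ^ 2 + (2 - p) / 2 * K * (l i) ^ q)) := by
    intro l
    rw [div_pow, mul_assoc, ← Real.exp_add]
    congr 1
    have hs : ∑ i : Fin N, (1 / 2 * l i * (x i) ^ 2 + (2 - p) / 2 * K * (l i) ^ q)
        = 1 / 2 * (∑ i : Fin N, l i * (x i) ^ 2) + (2 - p) / 2 * K * (∑ i : Fin N, (l i) ^ q) := by
      rw [Finset.sum_add_distrib, Finset.mul_sum, Finset.mul_sum]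
      simp [mul_assoc]
    rw [hs]
    ring
  -- value of the RHS product
  have hV : (∏ i : Fin N, (C / α) * Real.exp (-(|x i| ^ p / α ^ p)))
      = (C / α) ^ N * Real.exp (-∑ i : Fin N, |x i| ^ p / α ^ p) := by
    rw [Finset.prod_mul_distrib, Finset.prod_const, Finset.card_univ, Fintype.card_fin,
        ← Real.exp_sum]
    congr 1
    rw [← Finset.sum_neg_distrib]
  have hCα : (0:ℝ) < (C / α) ^ N := by positivity
  -- upper bound
  have hle : ∀ l : Fin N → {t : ℝ // 0 < t},
      (C ^ N / α ^ N) * Real.exp (-(1 / 2) * ∑ i : Fin N, (l i : ℝ) * (x i) ^ 2) *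
        Real.exp (-((2 - p) / 2) * K * ∑ i : Fin N, ((l i : ℝ)) ^ q)
      ≤ ∏ i : Fin N, (C / α) * Real.exp (-(|x i| ^ p / α ^ p)) := by
    intro l
    rw [hFeq (fun i => (l i : ℝ)), hV]
    apply mul_le_mul_of_nonneg_left _ hCα.le
    apply Real.exp_le_exp.mpr
    apply neg_le_neg
    apply Finset.sum_le_sum
    intro i _
    exact gg_key_le p α hp hp2 hα (x i) (hx i) (l i) (l i).2
  -- equality at the optimum
  have hopt : (C ^ N / α ^ N) *
        Real.exp (-(1 / 2) * ∑ i : Fin N, (p / (α ^ p * |x i| ^ (2 - p))) * (x i) ^ 2) *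
        Real.exp (-((2 - p) / 2) * K *
          ∑ i : Fin N, (p / (α ^ p * |x i| ^ (2 - p))) ^ q)
      = ∏ i : Fin N, (C / α) * Real.exp (-(|x i| ^ p / α ^ p)) := by
    rw [hFeq (fun i => p / (α ^ p * |x i| ^ (2 - p))), hV]
    congr 2
    apply neg_inj.mpr
    apply Finset.sum_congr rfl
    intro i _
    exact gg_key_eq p α hp hp2 hα (x i) (hx i)
  refine ⟨?_, hopt⟩
  apply le_antisymm (ciSup_le hle)
  have hbdd : BddAbove (Set.range fun l : Fin N → {t : ℝ // 0 < t} =>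
      (C ^ N / α ^ N) * Real.exp (-(1 / 2) * ∑ i : Fin N, (l i : ℝ) * (x i) ^ 2) *
        Real.exp (-((2 - p) / 2) * K * ∑ i : Fin N, ((l i : ℝ)) ^ q)) := by
    refine ⟨∏ i : Fin N, (C / α) * Real.exp (-(|x i| ^ p / α ^ p)), ?_⟩
    rintro _ ⟨l, rfl⟩
    exact hle l
  have hlstar : ∀ i : Fin N, (0:ℝ) < p / (α ^ p * |x i| ^ (2 - p)) := by
    intro i
    have : 0 < |x i| := abs_pos.mpr (hx i)
    positivity
  calc ∏ i : Fin N, (C / α) * Real.exp (-(|x i| ^ p / α ^ p)) = _ := hopt.symm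
    _ ≤ _ := le_ciSup hbdd (fun i => ⟨p / (α ^ p * |x i| ^ (2 - p)), hlstar i⟩)
end
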